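/- Forward-backward edge decomposition: with f the forward partition function and b the backward partition function, the total weight of all monotone alignments of z_{1..N} to x_{1..T} that align z_j to x_i equals f_{i,j} · b_{i,j} / c_{i,j}. Consequently Σ_i f_{i,j}·b_{i,j}/c_{i,j} = f_{T,N} for every fixed j, so the edge marginals w_{i,j} = f_{i,j}b_{i,j}/(c_{i,j}·f_{T,N}) form a probability distribution over i for each j. -/

import Mathlib

open scoped Classical

/-- Forward partition function: total weight of monotone alignments of `z_{1..j}` to
`x_{1..i}` with `z_j` aligned to `x_i` (strictly increasing `φ : {1,…,j} → {1,…,i}`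
with `φ j = i`), with weight `∏_{k=1}^j c (φ k) k`. Maps are encoded 0-based as
strictly monotone `Fin j → Fin i`. -/
noncomputable def fwd (c : ℕ → ℕ → ℝ) (i j : ℕ) : ℝ :=
  ∑ φ ∈ Finset.univ.filter
      (fun φ : Fin j → Fin i =>
        StrictMono φ ∧ ∀ k : Fin j, (k : ℕ) = j - 1 → ((φ k : Fin i) : ℕ) = i - 1),
    ∏ k : Fin j, c ((φ k : ℕ) + 1) ((k : ℕ) + 1)

/-- Backward partition function: total weight of monotone alignments of `z_{j..N}` to
`x_{i..T}` (strictly increasing `ψ : {j,…,N} → {i,…,T}` with `ψ j = i` and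
`ψ N = T`), with weight `∏_{k=j}^N c (ψ k) k`. -/
noncomputable def bwd (c : ℕ → ℕ → ℝ) (T N i j : ℕ) : ℝ :=
  ∑ ψ ∈ Finset.univ.filter
      (fun ψ : Fin (N - j + 1) → Fin (T - i + 1) =>
        StrictMono ψ ∧ (∀ k : Fin (N - j + 1), (k : ℕ) = 0 → ((ψ k : Fin (T - i + 1)) : ℕ) = 0)
          ∧ (∀ k : Fin (N - j + 1), (k : ℕ) = N - j → ((ψ k : Fin (T - i + 1)) : ℕ) = T - i)),
    ∏ k : Fin (N - j + 1), c (i + (ψ k : ℕ)) (j + (k : ℕ))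

section Aux
variable {T N i j : ℕ}

def glueF (T N i j : ℕ) (hi : 1 ≤ i) (hiT : i ≤ T)
    (fr : Fin j → Fin i) (bk : Fin (N - j + 1) → Fin (T - i + 1)) : Fin N → Fin T :=
  fun k =>
    if h : (k : ℕ) < j then
      ⟨(fr ⟨k, h⟩ : ℕ), lt_of_lt_of_le (fr ⟨k, h⟩).isLt hiT⟩
    else
      ⟨i - 1 + (bk ⟨(k : ℕ) - j + 1, by have := k.isLt; omega⟩ : ℕ), by
        have := (bk ⟨(k : ℕ) - j + 1, by have := k.isLt; omega⟩).isLt; omega⟩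

def frontOf (T N i j : ℕ) (hjN : j ≤ N) (hi : 1 ≤ i) (φ : Fin N → Fin T) : Fin j → Fin i :=
  fun k => ⟨min ((φ ⟨(k : ℕ), lt_of_lt_of_le k.isLt hjN⟩ : Fin T) : ℕ) (i - 1), by omega⟩

def backOf (T N i j : ℕ) (hj : 1 ≤ j) (hjN : j ≤ N) (hi : 1 ≤ i) (hiT : i ≤ T)
    (φ : Fin N → Fin T) : Fin (N - j + 1) → Fin (T - i + 1) :=
  fun k => ⟨((φ ⟨j - 1 + (k : ℕ), by have := k.isLt; omega⟩ : Fin T) : ℕ) - (i - 1), by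
    have := (φ ⟨j - 1 + (k : ℕ), by have := k.isLt; omega⟩).isLt; omega⟩

lemma glueF_lt {fr : Fin j → Fin i} {bk : Fin (N - j + 1) → Fin (T - i + 1)}
    (hi : 1 ≤ i) (hiT : i ≤ T) (k : Fin N) (h : (k : ℕ) < j)
    (m : Fin j) (hm : (m : ℕ) = (k : ℕ)) :
    ((glueF T N i j hi hiT fr bk k : Fin T) : ℕ) = (fr m : ℕ) := by
  have e : (⟨(k : ℕ), h⟩ : Fin j) = m := Fin.ext (by simpa using hm.symm)
  simp [glueF, h, e]

lemma glueF_ge {fr : Fin j → Fin i} {bk : Fin (N - j + 1) → Fin (T - i + 1)}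
    (hi : 1 ≤ i) (hiT : i ≤ T) (k : Fin N) (h : ¬ (k : ℕ) < j)
    (m : Fin (N - j + 1)) (hm : (m : ℕ) = (k : ℕ) - j + 1) :
    ((glueF T N i j hi hiT fr bk k : Fin T) : ℕ) = i - 1 + (bk m : ℕ) := by
  have e : (⟨(k : ℕ) - j + 1, by have := k.isLt; omega⟩ : Fin (N - j + 1)) = m :=
    Fin.ext (by simpa using hm.symm)
  simp [glueF, h, e]

variable (hN : 1 ≤ N) (hNT : N ≤ T) (hj : 1 ≤ j) (hjN : j ≤ N) (hi : 1 ≤ i) (hiT : i ≤ T)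

section glue
variable {fr : Fin j → Fin i} {bk : Fin (N - j + 1) → Fin (T - i + 1)}
  (hfr : StrictMono fr) (hfrlast : ∀ k : Fin j, (k : ℕ) = j - 1 → ((fr k : Fin i) : ℕ) = i - 1)
  (hbk : StrictMono bk) (hbk0 : ∀ k : Fin (N - j + 1), (k : ℕ) = 0 → ((bk k : Fin (T - i + 1)) : ℕ) = 0)
  (hbklast : ∀ k : Fin (N - j + 1), (k : ℕ) = N - j → ((bk k : Fin (T - i + 1)) : ℕ) = T - i)

include hj hjN hi hfr hfrlast hbk hbk0 in
lemma glueF_strictMono : StrictMono (glueF T N i j hi hiT fr bk) := by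
  intro a b hab
  have habn : (a : ℕ) < (b : ℕ) := hab
  rw [Fin.lt_def]
  by_cases ha : (a : ℕ) < j <;> by_cases hb : (b : ℕ) < j
  · rw [glueF_lt hi hiT a ha ⟨a, ha⟩ rfl, glueF_lt hi hiT b hb ⟨b, hb⟩ rfl]
    exact hfr (show (⟨a, ha⟩ : Fin j) < ⟨b, hb⟩ from habn)
  · rw [glueF_lt hi hiT a ha ⟨a, ha⟩ rfl,
      glueF_ge hi hiT b hb ⟨(b : ℕ) - j + 1, by have := b.isLt; omega⟩ rfl]
    have h1 : ((fr ⟨a, ha⟩ : Fin i) : ℕ) ≤ i - 1 := by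
      have := hfr.monotone (show (⟨a, ha⟩ : Fin j) ≤ ⟨j - 1, by omega⟩ from by
        rw [Fin.le_def]; simp; omega)
      have h2 := hfrlast ⟨j - 1, by omega⟩ rfl
      omega
    have h2 : 0 < (bk ⟨(b : ℕ) - j + 1, by have := b.isLt; omega⟩ : ℕ) := by
      have h3 := hbk (show (⟨0, by omega⟩ : Fin (N - j + 1))
          < ⟨(b : ℕ) - j + 1, by have := b.isLt; omega⟩ from Fin.mk_lt_mk.mpr (by omega))
      have h4 := hbk0 ⟨0, by omega⟩ rfl
      rw [Fin.lt_def] at h3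
      omega
    omega
  · omega
  · rw [glueF_ge hi hiT a ha ⟨(a : ℕ) - j + 1, by have := a.isLt; omega⟩ rfl,
      glueF_ge hi hiT b hb ⟨(b : ℕ) - j + 1, by have := b.isLt; omega⟩ rfl]
    have := hbk (show (⟨(a : ℕ) - j + 1, by have := a.isLt; omega⟩ : Fin (N - j + 1))
        < ⟨(b : ℕ) - j + 1, by have := b.isLt; omega⟩ from Fin.mk_lt_mk.mpr (by omega))
    rw [Fin.lt_def] at this
    omega

include hN hj hjN hi hiT hfrlast hbk0 hbklast in
lemma glueF_last :
    ((glueF T N i j hi hiT fr bk ⟨N - 1, by have := hj; omega⟩ : Fin T) : ℕ) = T - 1 := by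
  by_cases h : N - 1 < j
  · rw [glueF_lt hi hiT (⟨N - 1, by omega⟩ : Fin N) h ⟨N - 1, h⟩ rfl]
    have h1 := hfrlast ⟨N - 1, h⟩ (by simp; omega)
    have h2 := hbk0 ⟨0, by omega⟩ rfl
    have h3 := hbklast ⟨0, by omega⟩ (by simp; omega)
    omega
  · rw [glueF_ge hi hiT (⟨N - 1, by omega⟩ : Fin N) h ⟨N - 1 - j + 1, by omega⟩ (by simp)]
    have h3 := hbklast ⟨N - 1 - j + 1, by omega⟩ (by simp; omega)
    omega

include hj hjN hfrlast in
lemma glueF_at_j :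
    ((glueF T N i j hi hiT fr bk ⟨j - 1, by have := hi; omega⟩ : Fin T) : ℕ) = i - 1 := by
  rw [glueF_lt hi hiT (⟨j - 1, by omega⟩ : Fin N) (by simp; omega) ⟨j - 1, by omega⟩ (by simp)]
  exact hfrlast ⟨j - 1, by omega⟩ rfl

end glue

section split
variable {φ : Fin N → Fin T} (hφ : StrictMono φ)
  (hφlast : ∀ k : Fin N, (k : ℕ) = N - 1 → ((φ k : Fin T) : ℕ) = T - 1)
  (hφj : ∀ k : Fin N, (k : ℕ) = j - 1 → ((φ k : Fin T) : ℕ) = i - 1)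

include hj hjN hφ hφj in
lemma phi_le (k : Fin N) (hk : (k : ℕ) ≤ j - 1) : ((φ k : Fin T) : ℕ) ≤ i - 1 := by
  obtain ⟨m, hm⟩ : ∃ m : Fin N, (m : ℕ) = j - 1 := ⟨⟨j - 1, by omega⟩, rfl⟩
  have h1 := hφj m hm
  have h2 := hφ.monotone (show k ≤ m from by rw [Fin.le_def]; omega)
  rw [Fin.le_def] at h2
  omega

include hj hjN hφ hφj in
lemma phi_ge (k : Fin N) (hk : j - 1 ≤ (k : ℕ)) : i - 1 ≤ ((φ k : Fin T) : ℕ) := by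
  obtain ⟨m, hm⟩ : ∃ m : Fin N, (m : ℕ) = j - 1 := ⟨⟨j - 1, by omega⟩, rfl⟩
  have h1 := hφj m hm
  have h2 := hφ.monotone (show m ≤ k from by rw [Fin.le_def]; omega)
  rw [Fin.le_def] at h2
  omega

lemma frontOf_val (hjN' : j ≤ N) (hi' : 1 ≤ i) (k : Fin j) (m : Fin N) (hm : (m : ℕ) = (k : ℕ)) :
    ((frontOf T N i j hjN' hi' φ k : Fin i) : ℕ) = min ((φ m : Fin T) : ℕ) (i - 1) := by
  have e : (⟨(k : ℕ), lt_of_lt_of_le k.isLt hjN'⟩ : Fin N) = m := Fin.ext (by simpa using hm.symm)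
  simp [frontOf, e]

include hj hjN hφ hφj in
lemma frontOf_val' (k : Fin j) (m : Fin N) (hm : (m : ℕ) = (k : ℕ)) :
    ((frontOf T N i j hjN hi φ k : Fin i) : ℕ) = ((φ m : Fin T) : ℕ) := by
  rw [frontOf_val hjN hi k m hm]
  have := phi_le hj hjN hφ hφj m (by omega)
  omega

lemma backOf_val (hj' : 1 ≤ j) (hjN' : j ≤ N) (hi' : 1 ≤ i) (hiT' : i ≤ T)
    (k : Fin (N - j + 1)) (m : Fin N) (hm : (m : ℕ) = j - 1 + (k : ℕ)) :
    ((backOf T N i j hj' hjN' hi' hiT' φ k : Fin (T - i + 1)) : ℕ)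
      = ((φ m : Fin T) : ℕ) - (i - 1) := by
  have e : (⟨j - 1 + (k : ℕ), by have := k.isLt; omega⟩ : Fin N) = m :=
    Fin.ext (by simpa using hm.symm)
  simp [backOf, e]

include hj hjN hφ hφj in
lemma frontOf_strictMono : StrictMono (frontOf T N i j hjN hi φ) := by
  intro a b hab
  obtain ⟨ma, hma⟩ : ∃ m : Fin N, (m : ℕ) = (a : ℕ) := ⟨⟨a, lt_of_lt_of_le a.isLt hjN⟩, rfl⟩
  obtain ⟨mb, hmb⟩ : ∃ m : Fin N, (m : ℕ) = (b : ℕ) := ⟨⟨b, lt_of_lt_of_le b.isLt hjN⟩, rfl⟩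
  rw [Fin.lt_def, frontOf_val' hj hjN hi hφ hφj a ma hma, frontOf_val' hj hjN hi hφ hφj b mb hmb]
  have habn : (a : ℕ) < (b : ℕ) := hab
  exact hφ (show ma < mb from by rw [Fin.lt_def]; omega)

include hj hjN hφ hφj in
lemma frontOf_last (k : Fin j) (hk : (k : ℕ) = j - 1) :
    ((frontOf T N i j hjN hi φ k : Fin i) : ℕ) = i - 1 := by
  obtain ⟨m, hm⟩ : ∃ m : Fin N, (m : ℕ) = (k : ℕ) := ⟨⟨k, lt_of_lt_of_le k.isLt hjN⟩, rfl⟩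
  rw [frontOf_val' hj hjN hi hφ hφj k m hm]
  exact hφj m (by omega)

include hj hjN hφ hφj in
lemma backOf_strictMono : StrictMono (backOf T N i j hj hjN hi hiT φ) := by
  intro a b hab
  have habn : (a : ℕ) < (b : ℕ) := hab
  obtain ⟨ma, hma⟩ : ∃ m : Fin N, (m : ℕ) = j - 1 + (a : ℕ) :=
    ⟨⟨j - 1 + (a : ℕ), by have := a.isLt; omega⟩, rfl⟩
  obtain ⟨mb, hmb⟩ : ∃ m : Fin N, (m : ℕ) = j - 1 + (b : ℕ) :=
    ⟨⟨j - 1 + (b : ℕ), by have := b.isLt; omega⟩, rfl⟩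
  rw [Fin.lt_def, backOf_val hj hjN hi hiT a ma hma, backOf_val hj hjN hi hiT b mb hmb]
  have h1 := hφ (show ma < mb from by rw [Fin.lt_def]; omega)
  have h2 := phi_ge hj hjN hφ hφj ma (by omega)
  rw [Fin.lt_def] at h1
  omega

include hj hjN hφj in
lemma backOf_zero (k : Fin (N - j + 1)) (hk : (k : ℕ) = 0) :
    ((backOf T N i j hj hjN hi hiT φ k : Fin (T - i + 1)) : ℕ) = 0 := by
  obtain ⟨m, hm⟩ : ∃ m : Fin N, (m : ℕ) = j - 1 + (k : ℕ) :=
    ⟨⟨j - 1 + (k : ℕ), by have := k.isLt; omega⟩, rfl⟩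
  rw [backOf_val hj hjN hi hiT k m hm]
  have := hφj m (by omega)
  omega

include hN hj hjN hφlast in
lemma backOf_last (k : Fin (N - j + 1)) (hk : (k : ℕ) = N - j) :
    ((backOf T N i j hj hjN hi hiT φ k : Fin (T - i + 1)) : ℕ) = T - i := by
  obtain ⟨m, hm⟩ : ∃ m : Fin N, (m : ℕ) = j - 1 + (k : ℕ) :=
    ⟨⟨j - 1 + (k : ℕ), by have := k.isLt; omega⟩, rfl⟩
  rw [backOf_val hj hjN hi hiT k m hm]
  have := hφlast m (by omega)
  omega

end split

section inverses
variable {fr : Fin j → Fin i} {bk : Fin (N - j + 1) → Fin (T - i + 1)}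

include hj hjN in
lemma frontOf_glueF
    (hfr : StrictMono fr)
    (hfrlast : ∀ k : Fin j, (k : ℕ) = j - 1 → ((fr k : Fin i) : ℕ) = i - 1) :
    frontOf T N i j hjN hi (glueF T N i j hi hiT fr bk) = fr := by
  funext k
  apply Fin.ext
  obtain ⟨m, hm⟩ : ∃ m : Fin N, (m : ℕ) = (k : ℕ) := ⟨⟨k, lt_of_lt_of_le k.isLt hjN⟩, rfl⟩
  rw [frontOf_val hjN hi k m hm, glueF_lt hi hiT m (by omega) k hm.symm]
  have h1 := hfrlast ⟨j - 1, by omega⟩ rfl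
  have h2 := hfr.monotone (show k ≤ ⟨j - 1, by omega⟩ from by rw [Fin.le_def]; simp; omega)
  rw [Fin.le_def] at h2
  omega

include hj hjN in
lemma backOf_glueF
    (hfrlast : ∀ k : Fin j, (k : ℕ) = j - 1 → ((fr k : Fin i) : ℕ) = i - 1)
    (hbk0 : ∀ k : Fin (N - j + 1), (k : ℕ) = 0 → ((bk k : Fin (T - i + 1)) : ℕ) = 0) :
    backOf T N i j hj hjN hi hiT (glueF T N i j hi hiT fr bk) = bk := by
  funext k
  apply Fin.ext
  obtain ⟨m, hm⟩ : ∃ m : Fin N, (m : ℕ) = j - 1 + (k : ℕ) :=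
    ⟨⟨j - 1 + (k : ℕ), by have := k.isLt; omega⟩, rfl⟩
  rw [backOf_val hj hjN hi hiT k m hm]
  by_cases h0 : (k : ℕ) = 0
  · rw [glueF_lt hi hiT m (by omega) ⟨j - 1, by omega⟩ (by simp; omega)]
    have h1 := hfrlast ⟨j - 1, by omega⟩ rfl
    have h2 := hbk0 k h0
    omega
  · rw [glueF_ge hi hiT m (by omega) k (by omega)]
    omega

include hN hj hjN in
lemma glueF_split {φ : Fin N → Fin T} (hφ : StrictMono φ)
    (hφlast : ∀ k : Fin N, (k : ℕ) = N - 1 → ((φ k : Fin T) : ℕ) = T - 1)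
    (hφj : ∀ k : Fin N, (k : ℕ) = j - 1 → ((φ k : Fin T) : ℕ) = i - 1) :
    glueF T N i j hi hiT (frontOf T N i j hjN hi φ) (backOf T N i j hj hjN hi hiT φ) = φ := by
  funext k
  apply Fin.ext
  by_cases hk : (k : ℕ) < j
  · rw [glueF_lt hi hiT k hk ⟨(k : ℕ), hk⟩ rfl,
      frontOf_val' hj hjN hi hφ hφj ⟨(k : ℕ), hk⟩ k rfl]
  · rw [glueF_ge hi hiT k hk ⟨(k : ℕ) - j + 1, by have := k.isLt; omega⟩ rfl,
      backOf_val hj hjN hi hiT ⟨(k : ℕ) - j + 1, by have := k.isLt; omega⟩ k (by simp; omega)]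
    have := phi_ge hj hjN hφ hφj k (by omega)
    omega

end inverses

section weight
variable (c : ℕ → ℕ → ℝ)

noncomputable def Gfun (hi : 1 ≤ i) (hiT : i ≤ T) (fr : Fin j → Fin i)
    (bk : Fin (N - j + 1) → Fin (T - i + 1)) : ℕ → ℝ :=
  fun m => if h : m < N then c ((glueF T N i j hi hiT fr bk ⟨m, h⟩ : ℕ) + 1) (m + 1) else 1

noncomputable def Ffun (fr : Fin j → Fin i) : ℕ → ℝ :=
  fun m => if h : m < j then c ((fr ⟨m, h⟩ : ℕ) + 1) (m + 1) else 1

noncomputable def Hfun (bk : Fin (N - j + 1) → Fin (T - i + 1)) : ℕ → ℝ :=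
  fun m => if h : m < N - j + 1 then c (i + (bk ⟨m, h⟩ : ℕ)) (j + m) else 1

variable {fr : Fin j → Fin i} {bk : Fin (N - j + 1) → Fin (T - i + 1)}

lemma prod_eq_F :
    (∏ k : Fin j, c ((fr k : ℕ) + 1) ((k : ℕ) + 1)) = ∏ m ∈ Finset.range j, Ffun c fr m := by
  rw [← Fin.prod_univ_eq_prod_range]
  exact Finset.prod_congr rfl fun k _ => by simp [Ffun, k.isLt]

lemma prod_eq_G (hi : 1 ≤ i) (hiT : i ≤ T) :
    (∏ k : Fin N, c ((glueF T N i j hi hiT fr bk k : ℕ) + 1) ((k : ℕ) + 1))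
      = ∏ m ∈ Finset.range N, Gfun c hi hiT fr bk m := by
  rw [← Fin.prod_univ_eq_prod_range]
  exact Finset.prod_congr rfl fun k _ => by simp [Gfun, k.isLt]

lemma prod_eq_H :
    (∏ k : Fin (N - j + 1), c (i + (bk k : ℕ)) (j + (k : ℕ)))
      = ∏ m ∈ Finset.range (N - j + 1), Hfun c bk m := by
  rw [← Fin.prod_univ_eq_prod_range]
  exact Finset.prod_congr rfl fun k _ => by simp [Hfun, k.isLt]

include hj hjN hi hiT in
lemma weight_eq
    (hfrlast : ∀ k : Fin j, (k : ℕ) = j - 1 → ((fr k : Fin i) : ℕ) = i - 1)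
    (hbk0 : ∀ k : Fin (N - j + 1), (k : ℕ) = 0 → ((bk k : Fin (T - i + 1)) : ℕ) = 0) :
    (∏ k : Fin N, c ((glueF T N i j hi hiT fr bk k : ℕ) + 1) ((k : ℕ) + 1)) * c i j
      = (∏ k : Fin j, c ((fr k : ℕ) + 1) ((k : ℕ) + 1)) *
        (∏ k : Fin (N - j + 1), c (i + (bk k : ℕ)) (j + (k : ℕ))) := by
  rw [prod_eq_G c hi hiT, prod_eq_F, prod_eq_H]
  have hFG : ∀ m ∈ Finset.range j, Ffun c fr m = Gfun c hi hiT fr bk m := by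
    intro m hm
    have hmj : m < j := Finset.mem_range.mp hm
    have hmN : m < N := lt_of_lt_of_le hmj hjN
    simp only [Ffun, Gfun, dif_pos hmj, dif_pos hmN]
    rw [glueF_lt hi hiT ⟨m, hmN⟩ hmj ⟨m, hmj⟩ rfl]
  have hHG : ∀ m ∈ Finset.range (N - j + 1), Gfun c hi hiT fr bk (j - 1 + m) = Hfun c bk m := by
    intro m hm
    have hmr : m < N - j + 1 := Finset.mem_range.mp hm
    have hmN : j - 1 + m < N := by omega
    simp only [Hfun, Gfun, dif_pos hmr, dif_pos hmN]
    by_cases h0 : m = 0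
    · subst h0
      rw [glueF_lt hi hiT ⟨j - 1 + 0, hmN⟩ (by simp; omega) ⟨j - 1, by omega⟩ (by simp)]
      rw [hfrlast ⟨j - 1, by omega⟩ rfl, hbk0 ⟨0, hmr⟩ rfl]
      congr 1 <;> omega
    · rw [glueF_ge hi hiT ⟨j - 1 + m, hmN⟩ (by simp; omega) ⟨m, hmr⟩ (by simp; omega)]
      congr 1
      · have := (bk ⟨m, hmr⟩).isLt
        omega
      · omega
  have h1 : ∏ m ∈ Finset.range N, Gfun c hi hiT fr bk m
      = (∏ m ∈ Finset.range j, Gfun c hi hiT fr bk m) *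
        ∏ m ∈ Finset.Ico j N, Gfun c hi hiT fr bk m := by
    rw [Finset.range_eq_Ico,
      ← Finset.prod_Ico_consecutive (Gfun c hi hiT fr bk) (Nat.zero_le j) hjN,
      ← Finset.range_eq_Ico]
  have h2 : ∏ m ∈ Finset.Ico (j - 1) N, Gfun c hi hiT fr bk m
      = Gfun c hi hiT fr bk (j - 1) * ∏ m ∈ Finset.Ico j N, Gfun c hi hiT fr bk m := by
    rw [Finset.prod_eq_prod_Ico_succ_bot (show j - 1 < N by omega) (Gfun c hi hiT fr bk),
      show j - 1 + 1 = j from by omega]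
  have h3 : ∏ m ∈ Finset.Ico (j - 1) N, Gfun c hi hiT fr bk m
      = ∏ m ∈ Finset.range (N - j + 1), Hfun c bk m := by
    rw [Finset.prod_Ico_eq_prod_range, show N - (j - 1) = N - j + 1 from by omega]
    exact Finset.prod_congr rfl hHG
  have h4 : Gfun c hi hiT fr bk (j - 1) = c i j := by
    have hjN' : j - 1 < N := by omega
    simp only [Gfun, dif_pos hjN']
    rw [glueF_lt hi hiT ⟨j - 1, hjN'⟩ (by simp; omega) ⟨j - 1, by omega⟩ (by simp),
      hfrlast ⟨j - 1, by omega⟩ rfl]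
    congr 1 <;> omega
  rw [Finset.prod_congr rfl hFG, h1, ← h3, h2, h4]
  ring

end weight

include hN hNT hj hjN hi hiT in
lemma key_eq (c : ℕ → ℕ → ℝ) :
    (∑ φ ∈ Finset.univ.filter
        (fun φ : Fin N → Fin T =>
          StrictMono φ ∧ ((φ ⟨N - 1, by have := hNT; omega⟩ : Fin T) : ℕ) = T - 1
            ∧ ((φ ⟨j - 1, by have := hNT; omega⟩ : Fin T) : ℕ) = i - 1),
      ∏ k : Fin N, c ((φ k : ℕ) + 1) ((k : ℕ) + 1)) * c i j
      = fwd c i j * bwd c T N i j := by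
  rw [fwd, bwd, Finset.sum_mul_sum, ← Finset.sum_product', Finset.sum_mul]
  refine Finset.sum_nbij'
    (i := fun φ => (frontOf T N i j hjN hi φ, backOf T N i j hj hjN hi hiT φ))
    (j := fun p => glueF T N i j hi hiT p.1 p.2) ?_ ?_ ?_ ?_ ?_
  · intro φ hφm
    rw [Finset.mem_filter] at hφm
    obtain ⟨-, hφ, hlast, hatj⟩ := hφm
    have hφlast : ∀ k : Fin N, (k : ℕ) = N - 1 → ((φ k : Fin T) : ℕ) = T - 1 := by
      intro k hk
      have : k = ⟨N - 1, by omega⟩ := Fin.ext (by simpa using hk)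
      rw [this]; exact hlast
    have hφj : ∀ k : Fin N, (k : ℕ) = j - 1 → ((φ k : Fin T) : ℕ) = i - 1 := by
      intro k hk
      have : k = ⟨j - 1, by omega⟩ := Fin.ext (by simpa using hk)
      rw [this]; exact hatj
    rw [Finset.mem_product, Finset.mem_filter, Finset.mem_filter]
    exact ⟨⟨Finset.mem_univ _, frontOf_strictMono hj hjN hi hφ hφj,
        fun k hk => frontOf_last hj hjN hi hφ hφj k hk⟩,
      ⟨Finset.mem_univ _, backOf_strictMono hj hjN hi hiT hφ hφj,
        fun k hk => backOf_zero hj hjN hi hiT hφj k hk,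
        fun k hk => backOf_last hN hj hjN hi hiT hφlast k hk⟩⟩
  · intro p hp
    rw [Finset.mem_product, Finset.mem_filter, Finset.mem_filter] at hp
    obtain ⟨⟨-, hfr, hfrlast⟩, ⟨-, hbk, hbk0, hbklast⟩⟩ := hp
    rw [Finset.mem_filter]
    exact ⟨Finset.mem_univ _, glueF_strictMono hj hjN hi hiT hfr hfrlast hbk hbk0,
      glueF_last hN hj hjN hi hiT hfrlast hbk0 hbklast,
      glueF_at_j hj hjN hi hiT hfrlast⟩
  · intro φ hφm
    rw [Finset.mem_filter] at hφm
    obtain ⟨-, hφ, hlast, hatj⟩ := hφm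
    have hφlast : ∀ k : Fin N, (k : ℕ) = N - 1 → ((φ k : Fin T) : ℕ) = T - 1 := by
      intro k hk
      have : k = ⟨N - 1, by omega⟩ := Fin.ext (by simpa using hk)
      rw [this]; exact hlast
    have hφj : ∀ k : Fin N, (k : ℕ) = j - 1 → ((φ k : Fin T) : ℕ) = i - 1 := by
      intro k hk
      have : k = ⟨j - 1, by omega⟩ := Fin.ext (by simpa using hk)
      rw [this]; exact hatj
    exact glueF_split hN hj hjN hi hiT hφ hφlast hφj
  · intro p hp
    rw [Finset.mem_product, Finset.mem_filter, Finset.mem_filter] at hp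
    obtain ⟨⟨-, hfr, hfrlast⟩, ⟨-, hbk, hbk0, hbklast⟩⟩ := hp
    exact Prod.ext (frontOf_glueF hj hjN hi hiT hfr hfrlast)
      (backOf_glueF hj hjN hi hiT hfrlast hbk0)
  · intro φ hφm
    rw [Finset.mem_filter] at hφm
    obtain ⟨-, hφ, hlast, hatj⟩ := hφm
    have hφlast : ∀ k : Fin N, (k : ℕ) = N - 1 → ((φ k : Fin T) : ℕ) = T - 1 := by
      intro k hk
      have : k = ⟨N - 1, by omega⟩ := Fin.ext (by simpa using hk)
      rw [this]; exact hlast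
    have hφj : ∀ k : Fin N, (k : ℕ) = j - 1 → ((φ k : Fin T) : ℕ) = i - 1 := by
      intro k hk
      have : k = ⟨j - 1, by omega⟩ := Fin.ext (by simpa using hk)
      rw [this]; exact hatj
    have hfrlast := fun k hk => frontOf_last hj hjN hi hφ hφj k hk
    have hbk0 := fun k hk => backOf_zero hj hjN hi hiT hφj k hk
    have := weight_eq hj hjN hi hiT c (fr := frontOf T N i j hjN hi φ)
      (bk := backOf T N i j hj hjN hi hiT φ) hfrlast hbk0
    rw [glueF_split hN hj hjN hi hiT hφ hφlast hφj] at this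
    exact this

end Aux

/-- Forward-backward edge decomposition: the total weight of all monotone alignments of
`z_{1..N}` to `x_{1..T}` that align `z_j` to `x_i` equals `fwd i j * bwd i j / c i j`.
Consequently, for every fixed `j`, `∑_i fwd i j * bwd i j / c i j = fwd T N`, so the
edge marginals `w i j = fwd i j * bwd i j / (c i j * fwd T N)` form a probability
distribution over `i`. -/
theorem forward_backward_decomposition (c : ℕ → ℕ → ℝ) (hc : ∀ i j, 0 < c i j)
    (T N i j : ℕ) (hN : 1 ≤ N) (hNT : N ≤ T)
    (hj : 1 ≤ j) (hjN : j ≤ N) (hi : 1 ≤ i) (hiT : i ≤ T) :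
    (∑ φ ∈ Finset.univ.filter
        (fun φ : Fin N → Fin T =>
          StrictMono φ ∧ ((φ ⟨N - 1, by omega⟩ : Fin T) : ℕ) = T - 1
            ∧ ((φ ⟨j - 1, by omega⟩ : Fin T) : ℕ) = i - 1),
      ∏ k : Fin N, c ((φ k : ℕ) + 1) ((k : ℕ) + 1))
      = fwd c i j * bwd c T N i j / c i j
    ∧ (∑ i' ∈ Finset.Icc 1 T, fwd c i' j * bwd c T N i' j / c i' j) = fwd c T N
    ∧ (∑ i' ∈ Finset.Icc 1 T,
        fwd c i' j * bwd c T N i' j / (c i' j * fwd c T N)) = 1 := by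
  have part1 : ∀ i', 1 ≤ i' → i' ≤ T →
      (∑ φ ∈ Finset.univ.filter
        (fun φ : Fin N → Fin T =>
          StrictMono φ ∧ ((φ ⟨N - 1, by omega⟩ : Fin T) : ℕ) = T - 1
            ∧ ((φ ⟨j - 1, by omega⟩ : Fin T) : ℕ) = i' - 1),
      ∏ k : Fin N, c ((φ k : ℕ) + 1) ((k : ℕ) + 1))
      = fwd c i' j * bwd c T N i' j / c i' j := by
    intro i' hi' hi'T
    rw [eq_div_iff (ne_of_gt (hc i' j))]
    exact key_eq hN hNT hj hjN hi' hi'T c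
  have part2 : (∑ i' ∈ Finset.Icc 1 T, fwd c i' j * bwd c T N i' j / c i' j) = fwd c T N := by
    have hmap : ∀ φ ∈ Finset.univ.filter
        (fun φ : Fin N → Fin T =>
          StrictMono φ ∧ ∀ k : Fin N, (k : ℕ) = N - 1 → ((φ k : Fin T) : ℕ) = T - 1),
        ((φ ⟨j - 1, by omega⟩ : Fin T) : ℕ) + 1 ∈ Finset.Icc 1 T := by
      intro φ _
      rw [Finset.mem_Icc]
      have := (φ ⟨j - 1, by omega⟩).isLt
      omega
    have step3 := Finset.sum_fiberwise_of_maps_to hmap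
      (fun φ => ∏ k : Fin N, c ((φ k : ℕ) + 1) ((k : ℕ) + 1))
    calc (∑ i' ∈ Finset.Icc 1 T, fwd c i' j * bwd c T N i' j / c i' j)
        = ∑ i' ∈ Finset.Icc 1 T, ∑ φ ∈ Finset.univ.filter
            (fun φ : Fin N → Fin T =>
              StrictMono φ ∧ ((φ ⟨N - 1, by omega⟩ : Fin T) : ℕ) = T - 1
                ∧ ((φ ⟨j - 1, by omega⟩ : Fin T) : ℕ) = i' - 1),
            ∏ k : Fin N, c ((φ k : ℕ) + 1) ((k : ℕ) + 1) := by
          refine Finset.sum_congr rfl fun i' hi' => ?_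
          rw [Finset.mem_Icc] at hi'
          exact (part1 i' hi'.1 hi'.2).symm
      _ = ∑ i' ∈ Finset.Icc 1 T, ∑ φ ∈ (Finset.univ.filter
            (fun φ : Fin N → Fin T =>
              StrictMono φ ∧ ∀ k : Fin N, (k : ℕ) = N - 1 → ((φ k : Fin T) : ℕ) = T - 1)).filter
            (fun φ => ((φ ⟨j - 1, by omega⟩ : Fin T) : ℕ) + 1 = i'),
            ∏ k : Fin N, c ((φ k : ℕ) + 1) ((k : ℕ) + 1) := by
          refine Finset.sum_congr rfl fun i' hi' => ?_
          rw [Finset.mem_Icc] at hi'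
          refine Finset.sum_congr ?_ fun _ _ => rfl
          rw [Finset.filter_filter]
          refine Finset.filter_congr fun φ _ => ?_
          constructor
          · rintro ⟨hφ, hlast, hatj⟩
            refine ⟨⟨hφ, fun k hk => ?_⟩, by omega⟩
            have : k = ⟨N - 1, by omega⟩ := Fin.ext (by simpa using hk)
            rw [this]; exact hlast
          · rintro ⟨⟨hφ, hlast⟩, hatj⟩
            exact ⟨hφ, hlast ⟨N - 1, by omega⟩ (by simp), by omega⟩
      _ = fwd c T N := by rw [step3, fwd]
  have hFpos : 0 < fwd c T N := by
    rw [fwd]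
    apply Finset.sum_pos
    · intro φ _
      exact Finset.prod_pos fun k _ => hc _ _
    · refine ⟨fun k => ⟨(k : ℕ) + (T - N), by have := k.isLt; omega⟩, ?_⟩
      rw [Finset.mem_filter]
      refine ⟨Finset.mem_univ _, ?_, ?_⟩
      · intro a b hab
        have : (a : ℕ) < (b : ℕ) := hab
        exact Fin.mk_lt_mk.mpr (by omega)
      · intro k hk
        simp only [Fin.val_mk]
        omega
  refine ⟨part1 i hi hiT, part2, ?_⟩
  have : ∀ i' ∈ Finset.Icc 1 T,
      fwd c i' j * bwd c T N i' j / (c i' j * fwd c T N)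
        = fwd c i' j * bwd c T N i' j / c i' j / fwd c T N := by
    intro i' _
    rw [div_mul_eq_div_div]
  rw [Finset.sum_congr rfl this, ← Finset.sum_div, part2, div_self (ne_of_gt hFpos)]
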